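/- Suppose x* is a least-squares solution of min ‖Ax − b‖₂², the distribution 𝒟 satisfies that 𝔼[SSᵀ] is positive definite, and {x^k} is generated by the RCGLS algorithm. Then 𝔼[‖x^{k+1} − x*‖²_{AᵀA} | x^k] ≤ (1 − γ_k σ²_min(AM^{1/2})) ‖x^k − x*‖²_{AᵀA}, where γ_k ≥ 1 is defined by the AᵀA-angle between the sketched gradient and the previous direction, and M = 𝔼[SSᵀ/‖AS‖₂²]. -/

import Mathlib

open Matrix

/-- Squared spectral (ℓ2 operator) norm of a real matrix. -/
noncomputable def opNormSq {a b : ℕ} (B : Matrix (Fin a) (Fin b) ℝ) : ℝ :=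
  sSup {t : ℝ | ∃ v : Fin b → ℝ, v ⬝ᵥ v = 1 ∧ t = B.mulVec v ⬝ᵥ B.mulVec v}

/-- Squared smallest nonzero singular value of a real matrix. -/
noncomputable def sigmaMinSq {a b : ℕ} (B : Matrix (Fin a) (Fin b) ℝ) : ℝ :=
  sInf {t : ℝ | ∃ v : Fin b → ℝ, (∃ u : Fin a → ℝ, Bᵀ.mulVec u = v) ∧
    v ⬝ᵥ v = 1 ∧ t = B.mulVec v ⬝ᵥ B.mulVec v}

/-- The positive semidefinite square root `Matrix.PosSemidef.sqrt` as defined in the older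
Mathlib (removed since); spelled out here with its old definition. -/
noncomputable def Matrix.PosSemidef.sqrt {n : Type*} [Fintype n] [DecidableEq n]
    {A : Matrix n n ℝ} (hA : A.PosSemidef) : Matrix n n ℝ :=
  hA.1.eigenvectorUnitary.1 * diagonal ((↑) ∘ (√·) ∘ hA.1.eigenvalues) *
    (star hA.1.eigenvectorUnitary : Matrix n n ℝ)

lemma psd_sqrt_transpose {n : Type*} [Fintype n] [DecidableEq n]
    {A : Matrix n n ℝ} (hA : A.PosSemidef) : (hA.sqrt)ᵀ = hA.sqrt := by
  unfold Matrix.PosSemidef.sqrt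
  rw [star_eq_conjTranspose, conjTranspose_eq_transpose_of_trivial]
  rw [transpose_mul, transpose_mul, diagonal_transpose, transpose_transpose, mul_assoc]

lemma psd_sqrt_mul_self {n : Type*} [Fintype n] [DecidableEq n]
    {A : Matrix n n ℝ} (hA : A.PosSemidef) : hA.sqrt * hA.sqrt = A := by
  unfold Matrix.PosSemidef.sqrt
  have hU : (star hA.1.eigenvectorUnitary : Matrix n n ℝ) * hA.1.eigenvectorUnitary.1 = 1 :=
    Unitary.coe_star_mul_self _
  have hD : diagonal ((↑) ∘ (√·) ∘ hA.1.eigenvalues) * diagonal ((↑) ∘ (√·) ∘ hA.1.eigenvalues)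
      = diagonal (RCLike.ofReal ∘ hA.1.eigenvalues : n → ℝ) := by
    rw [diagonal_mul_diagonal]
    congr 1
    funext i
    simp [Real.mul_self_sqrt (hA.eigenvalues_nonneg i)]
  calc _ = hA.1.eigenvectorUnitary.1 * (diagonal ((↑) ∘ (√·) ∘ hA.1.eigenvalues) *
        ((star hA.1.eigenvectorUnitary : Matrix n n ℝ) * hA.1.eigenvectorUnitary.1) *
        diagonal ((↑) ∘ (√·) ∘ hA.1.eigenvalues)) *
        (star hA.1.eigenvectorUnitary : Matrix n n ℝ) := by simp only [Matrix.mul_assoc]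
    _ = A := by
      rw [hU, Matrix.mul_one, hD]
      conv_rhs => rw [hA.1.spectral_theorem]
      simp

lemma dot_self_nonneg {m : ℕ} (v : Fin m → ℝ) : 0 ≤ v ⬝ᵥ v :=
  Finset.sum_nonneg fun i _ => mul_self_nonneg (v i)

lemma mulVec_dot {m k : ℕ} (B : Matrix (Fin m) (Fin k) ℝ) (v : Fin k → ℝ) (u : Fin m → ℝ) :
    B.mulVec v ⬝ᵥ u = v ⬝ᵥ Bᵀ.mulVec u := by
  rw [Matrix.dotProduct_mulVec v Bᵀ u, Matrix.vecMul_transpose]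

lemma dotCS {m : ℕ} (u v : Fin m → ℝ) : (u ⬝ᵥ v)^2 ≤ (u ⬝ᵥ u) * (v ⬝ᵥ v) := by
  have h := Finset.sum_mul_sq_le_sq_mul_sq Finset.univ u v
  simpa only [dotProduct, pow_two] using h

lemma opNormSq_bddAbove {a b : ℕ} (B : Matrix (Fin a) (Fin b) ℝ) :
    BddAbove {t : ℝ | ∃ v : Fin b → ℝ, v ⬝ᵥ v = 1 ∧ t = B.mulVec v ⬝ᵥ B.mulVec v} := by
  refine ⟨∑ i, (∑ j, |B i j|)^2, ?_⟩
  rintro t ⟨v, hv, rfl⟩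
  have habs : ∀ j, |v j| ≤ 1 := by
    intro j
    rw [abs_le_one_iff_mul_self_le_one]
    calc v j * v j ≤ ∑ j', v j' * v j' :=
          Finset.single_le_sum (fun j' _ => mul_self_nonneg (v j')) (Finset.mem_univ j)
      _ = 1 := hv
  refine Finset.sum_le_sum fun i _ => ?_
  have h1 : |B.mulVec v i| ≤ ∑ j, |B i j| := by
    calc |B.mulVec v i| = |∑ j, B i j * v j| := rfl
      _ ≤ ∑ j, |B i j * v j| := Finset.abs_sum_le_sum_abs _ _
      _ ≤ ∑ j, |B i j| := Finset.sum_le_sum fun j _ => by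
          rw [abs_mul]
          calc |B i j| * |v j| ≤ |B i j| * 1 :=
                mul_le_mul_of_nonneg_left (habs j) (abs_nonneg _)
            _ = |B i j| := mul_one _
  calc B.mulVec v i * B.mulVec v i = |B.mulVec v i| * |B.mulVec v i| := (abs_mul_abs_self _).symm
    _ ≤ (∑ j, |B i j|)^2 := by
        rw [pow_two]
        exact mul_le_mul h1 h1 (abs_nonneg _) (Finset.sum_nonneg fun j _ => abs_nonneg _)

lemma opNormSq_mulVec_le {a b : ℕ} (B : Matrix (Fin a) (Fin b) ℝ) (w : Fin b → ℝ) :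
    B.mulVec w ⬝ᵥ B.mulVec w ≤ opNormSq B * (w ⬝ᵥ w) := by
  by_cases hw : w ⬝ᵥ w = 0
  · have : w = 0 := dotProduct_self_eq_zero.mp hw
    subst this
    simp [Matrix.mulVec_zero]
  · have hpos : 0 < w ⬝ᵥ w := lt_of_le_of_ne (dot_self_nonneg w) (Ne.symm hw)
    set c := Real.sqrt (w ⬝ᵥ w) with hc
    have hc2 : c * c = w ⬝ᵥ w := Real.mul_self_sqrt (le_of_lt hpos)
    have hcpos : 0 < c := Real.sqrt_pos.mpr hpos
    have hv1 : (c⁻¹ • w) ⬝ᵥ (c⁻¹ • w) = 1 := by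
      rw [smul_dotProduct, dotProduct_smul, smul_eq_mul, smul_eq_mul, ← hc2]
      field_simp
    have hmem : B.mulVec (c⁻¹ • w) ⬝ᵥ B.mulVec (c⁻¹ • w) ∈
        {t : ℝ | ∃ v : Fin b → ℝ, v ⬝ᵥ v = 1 ∧ t = B.mulVec v ⬝ᵥ B.mulVec v} :=
      ⟨c⁻¹ • w, hv1, rfl⟩
    have hle := le_csSup (opNormSq_bddAbove B) hmem
    have hsmul : B.mulVec (c⁻¹ • w) ⬝ᵥ B.mulVec (c⁻¹ • w)
        = c⁻¹ * (c⁻¹ * (B.mulVec w ⬝ᵥ B.mulVec w)) := by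
      rw [Matrix.mulVec_smul, smul_dotProduct, dotProduct_smul,
        smul_eq_mul, smul_eq_mul]
    rw [hsmul] at hle
    have := mul_le_mul_of_nonneg_left hle (le_of_lt (mul_pos hcpos hcpos))
    calc B.mulVec w ⬝ᵥ B.mulVec w
        = (c * c) * (c⁻¹ * (c⁻¹ * (B.mulVec w ⬝ᵥ B.mulVec w))) := by
          field_simp
      _ ≤ (c * c) * opNormSq B := by
          exact mul_le_mul_of_nonneg_left hle (le_of_lt (mul_pos hcpos hcpos))
      _ = opNormSq B * (w ⬝ᵥ w) := by rw [hc2]; ring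

lemma opNormSq_nonneg {a b : ℕ} (B : Matrix (Fin a) (Fin b) ℝ) : 0 ≤ opNormSq B := by
  by_cases h : ∃ v : Fin b → ℝ, v ⬝ᵥ v = 1
  · obtain ⟨v, hv⟩ := h
    have := le_csSup (opNormSq_bddAbove B) ⟨v, hv, rfl⟩
    exact le_trans (dot_self_nonneg _) this
  · have hempty : {t : ℝ | ∃ v : Fin b → ℝ, v ⬝ᵥ v = 1 ∧ t = B.mulVec v ⬝ᵥ B.mulVec v} = ∅ := by
      ext t; simp only [Set.mem_setOf_eq, Set.mem_empty_iff_false, iff_false]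
      rintro ⟨v, hv, -⟩; exact h ⟨v, hv⟩
    rw [opNormSq, hempty, Real.sSup_empty]

lemma sigma_key {a b : ℕ} (B : Matrix (Fin a) (Fin b) ℝ) (u x : Fin a → ℝ)
    (hx : B.mulVec (Bᵀ.mulVec x) = u) :
    sigmaMinSq B * (u ⬝ᵥ u) ≤ Bᵀ.mulVec u ⬝ᵥ Bᵀ.mulVec u := by
  have hbdd : BddBelow {t : ℝ | ∃ v : Fin b → ℝ, (∃ u : Fin a → ℝ, Bᵀ.mulVec u = v) ∧
      v ⬝ᵥ v = 1 ∧ t = B.mulVec v ⬝ᵥ B.mulVec v} := by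
    refine ⟨0, ?_⟩; rintro t ⟨v, -, -, rfl⟩; exact dot_self_nonneg _
  rcases le_or_gt (sigmaMinSq B) 0 with hσ | hσ
  · exact le_trans (mul_nonpos_of_nonpos_of_nonneg hσ (dot_self_nonneg u)) (dot_self_nonneg _)
  · by_cases hu : u ⬝ᵥ u = 0
    · rw [hu, mul_zero]; exact dot_self_nonneg _
    · have hupos : 0 < u ⬝ᵥ u := lt_of_le_of_ne (dot_self_nonneg u) (Ne.symm hu)
      set v0 := Bᵀ.mulVec x with hv0def
      have hu' : B.mulVec v0 = u := hx
      have hv0 : v0 ⬝ᵥ v0 ≠ 0 := by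
        intro h0
        have : v0 = 0 := dotProduct_self_eq_zero.mp h0
        rw [this, Matrix.mulVec_zero] at hu'
        rw [← hu'] at hu
        simp at hu
      have hv0pos : 0 < v0 ⬝ᵥ v0 := lt_of_le_of_ne (dot_self_nonneg v0) (Ne.symm hv0)
      set c := Real.sqrt (v0 ⬝ᵥ v0) with hc
      have hc2 : c * c = v0 ⬝ᵥ v0 := Real.mul_self_sqrt (le_of_lt hv0pos)
      have hcpos : 0 < c := Real.sqrt_pos.mpr hv0pos
      have hv1 : (c⁻¹ • v0) ⬝ᵥ (c⁻¹ • v0) = 1 := by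
        rw [smul_dotProduct, dotProduct_smul, smul_eq_mul, smul_eq_mul, ← hc2]
        field_simp
      have hmem : B.mulVec (c⁻¹ • v0) ⬝ᵥ B.mulVec (c⁻¹ • v0) ∈
          {t : ℝ | ∃ v : Fin b → ℝ, (∃ u : Fin a → ℝ, Bᵀ.mulVec u = v) ∧
            v ⬝ᵥ v = 1 ∧ t = B.mulVec v ⬝ᵥ B.mulVec v} := by
        exact ⟨c⁻¹ • v0, ⟨c⁻¹ • x, Matrix.mulVec_smul Bᵀ c⁻¹ x⟩, hv1, rfl⟩
      have hle := csInf_le hbdd hmem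
      have hBv : B.mulVec (c⁻¹ • v0) ⬝ᵥ B.mulVec (c⁻¹ • v0)
          = c⁻¹ * (c⁻¹ * (u ⬝ᵥ u)) := by
        rw [Matrix.mulVec_smul, smul_dotProduct, dotProduct_smul,
          smul_eq_mul, smul_eq_mul, hu']
      rw [hBv] at hle
      -- σ * (v0 ⬝ᵥ v0) ≤ u ⬝ᵥ u
      have h1 : sigmaMinSq B * (v0 ⬝ᵥ v0) ≤ u ⬝ᵥ u := by
        have := mul_le_mul_of_nonneg_left hle (le_of_lt (mul_pos hcpos hcpos))
        calc sigmaMinSq B * (v0 ⬝ᵥ v0) = (c * c) * sigmaMinSq B := by rw [hc2]; ring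
          _ ≤ (c * c) * (c⁻¹ * (c⁻¹ * (u ⬝ᵥ u))) :=
              mul_le_mul_of_nonneg_left hle (le_of_lt (mul_pos hcpos hcpos))
          _ = u ⬝ᵥ u := by field_simp
      -- Cauchy-Schwarz
      have h2 : (u ⬝ᵥ u)^2 ≤ (Bᵀ.mulVec u ⬝ᵥ Bᵀ.mulVec u) * (v0 ⬝ᵥ v0) := by
        have hstep : u ⬝ᵥ u = Bᵀ.mulVec u ⬝ᵥ v0 := by
          rw [mulVec_dot Bᵀ u v0, Matrix.transpose_transpose, hu']
        rw [hstep]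
        exact dotCS _ _
      nlinarith [dot_self_nonneg (Bᵀ.mulVec u), hσ, hupos, hv0pos]

lemma symm_range {m : ℕ} (G : Matrix (Fin m) (Fin m) ℝ) (hG : Gᵀ = G) (u : Fin m → ℝ)
    (hu : ∀ y, G.mulVec y = 0 → u ⬝ᵥ y = 0) : ∃ x, G.mulVec x = u := by
  classical
  set T : EuclideanSpace ℝ (Fin m) →ₗ[ℝ] EuclideanSpace ℝ (Fin m) :=
    Matrix.toEuclideanLin G with hT
  set φ : (Fin m → ℝ) → EuclideanSpace ℝ (Fin m) :=
    fun x => (WithLp.equiv 2 (Fin m → ℝ)).symm x with hφ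
  set ψ : EuclideanSpace ℝ (Fin m) → (Fin m → ℝ) :=
    fun a => WithLp.equiv 2 (Fin m → ℝ) a with hψ
  have hφψ : ∀ a : EuclideanSpace ℝ (Fin m), φ (ψ a) = a := fun a =>
    (WithLp.equiv 2 (Fin m → ℝ)).symm_apply_apply a
  have hψφ : ∀ x : Fin m → ℝ, ψ (φ x) = x := fun x =>
    (WithLp.equiv 2 (Fin m → ℝ)).apply_symm_apply x
  have hTa : ∀ x : Fin m → ℝ, T (φ x) = φ (G.mulVec x) := fun x =>
    Matrix.toEuclideanLin_apply_piLp_toLp G x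
  have hin : ∀ x y : Fin m → ℝ, inner ℝ (φ x) (φ y) = x ⬝ᵥ y := by
    intro x y
    show inner ℝ (WithLp.toLp 2 x) (WithLp.toLp 2 y) = x ⬝ᵥ y
    rw [EuclideanSpace.inner_toLp_toLp]
    simp
    exact dotProduct_comm _ _
  have hTsymm : ∀ x y : Fin m → ℝ, inner ℝ (T (φ x)) (φ y) = inner ℝ (φ x) (T (φ y)) := by
    intro x y
    rw [hTa, hTa, hin, hin, mulVec_dot, hG]
  have h1 : LinearMap.range T ≤ (LinearMap.ker T)ᗮ := by
    rintro z ⟨a, rfl⟩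
    rw [Submodule.mem_orthogonal]
    intro y hy
    have hy0 : T y = 0 := hy
    have : inner ℝ y (T a) = inner ℝ (T y) a := by
      rw [← hφψ y, ← hφψ a, hTsymm]
    rw [this, hy0, inner_zero_left]
  have h2 : LinearMap.range T = (LinearMap.ker T)ᗮ := by
    apply Submodule.eq_of_le_of_finrank_eq h1
    have e1 := LinearMap.finrank_range_add_finrank_ker T
    have e2 := Submodule.finrank_add_finrank_orthogonal (K := LinearMap.ker T)
    omega
  have humem : φ u ∈ (LinearMap.ker T)ᗮ := by
    rw [Submodule.mem_orthogonal]
    intro y hy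
    have hy0 : T y = 0 := hy
    have hy1 : T (φ (ψ y)) = 0 := by rw [hφψ]; exact hy0
    rw [hTa] at hy1
    have hy2 : G.mulVec (ψ y) = 0 := by
      have := congrArg ψ hy1
      rw [hψφ] at this
      simpa [hψ] using this
    have := hu (ψ y) hy2
    rw [← hφψ y, hin, dotProduct_comm]
    exact this
  rw [← h2] at humem
  obtain ⟨a, ha⟩ := humem
  refine ⟨ψ a, ?_⟩
  have : T (φ (ψ a)) = φ u := by rw [hφψ]; exact ha
  rw [hTa] at this
  have := congrArg ψ this
  rw [hψφ, hψφ] at this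
  exact this

lemma dot_expand {m : ℕ} (u v : Fin m → ℝ) (s : ℝ) :
    (u + s • v) ⬝ᵥ (u + s • v)
      = u ⬝ᵥ u + s * (u ⬝ᵥ v) + s * (v ⬝ᵥ u) + s * s * (v ⬝ᵥ v) := by
  rw [dotProduct_add, add_dotProduct, add_dotProduct,
    dotProduct_smul, smul_dotProduct, smul_dotProduct,
    dotProduct_smul, smul_eq_mul, smul_eq_mul, smul_eq_mul, smul_eq_mul]
  ring

lemma sum_mulVec' {m k : ℕ} {ι : Type*} [Fintype ι] (N : ι → Matrix (Fin m) (Fin k) ℝ)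
    (v : Fin k → ℝ) : (∑ j, N j).mulVec v = ∑ j, (N j).mulVec v := by
  ext l
  simp only [Matrix.mulVec, dotProduct, Matrix.sum_apply, Finset.sum_apply,
    Finset.sum_mul]
  exact Finset.sum_comm

lemma dot_sum' {m : ℕ} {ι : Type*} [Fintype ι] (z : Fin m → ℝ) (v : ι → Fin m → ℝ) :
    z ⬝ᵥ (∑ j, v j) = ∑ j, z ⬝ᵥ v j := by
  simp only [dotProduct, Finset.sum_apply, Finset.mul_sum]
  exact Finset.sum_comm

lemma dot_sum_eval {m : ℕ} {ι : Type*} [Fintype ι] (N : ι → Matrix (Fin m) (Fin m) ℝ)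
    (c : ι → ℝ) (z : Fin m → ℝ) :
    z ⬝ᵥ (∑ j, c j • N j).mulVec z = ∑ j, c j * (z ⬝ᵥ (N j).mulVec z) := by
  rw [sum_mulVec', dot_sum']
  exact Finset.sum_congr rfl fun j _ => by
    rw [Matrix.smul_mulVec, dotProduct_smul, smul_eq_mul]

set_option maxHeartbeats 1000000 in
/-- One-step expected contraction of RCGLS (Theorem 2.2):
`𝔼[‖x^{k+1}−x*‖²_{AᵀA} | x^k] ≤ (1 − γ_k σ²_min(A M^{1/2})) ‖x^k−x*‖²_{AᵀA}`,
where the conditional expectation is taken over the sketch `S_k` of a discrete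
distribution, `γ_k` is the infimum over sketches of the inverse `AᵀA`-angle
factor between the sketched gradient and the previous direction, and
`M = 𝔼[SSᵀ/‖AS‖₂²]`. -/
theorem stmt12 {n d q : ℕ} {ι : Type*} [Fintype ι] [Nonempty ι]
    (A : Matrix (Fin n) (Fin d) ℝ) (b : Fin n → ℝ)
    (xstar : Fin d → ℝ) (hstar : Aᵀ.mulVec (A.mulVec xstar) = Aᵀ.mulVec b)
    (prob : ι → ℝ) (hprob : ∀ i, 0 ≤ prob i) (hsum : ∑ i, prob i = 1)
    (S : ι → Matrix (Fin d) (Fin q) ℝ)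
    (hE : (∑ i, prob i • (S i * (S i)ᵀ)).PosDef)
    (hMpsd : (∑ i, (prob i / opNormSq (A * S i)) • (S i * (S i)ᵀ)).PosSemidef)
    (xk pkm1 : Fin d → ℝ)
    (horth : A.mulVec (xk - xstar) ⬝ᵥ A.mulVec pkm1 = 0) :
    let rk := b - A.mulVec xk
    let w : ι → (Fin q → ℝ) := fun i => (S i)ᵀ.mulVec (Aᵀ.mulVec rk)
    let τ : ι → ℝ := fun i =>
      -(A.mulVec ((S i).mulVec (w i)) ⬝ᵥ A.mulVec pkm1) /
        (A.mulVec pkm1 ⬝ᵥ A.mulVec pkm1)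
    let pk : ι → (Fin d → ℝ) := fun i => (S i).mulVec (w i) + τ i • pkm1
    let μ : ι → ℝ := fun i => (w i ⬝ᵥ w i) / (A.mulVec (pk i) ⬝ᵥ A.mulVec (pk i))
    let xnext : ι → (Fin d → ℝ) := fun i => xk + μ i • pk i
    let γk : ℝ := sInf (Set.range fun i : ι =>
      (1 - (A.mulVec ((S i).mulVec (w i)) ⬝ᵥ A.mulVec pkm1) ^ 2 /
          ((A.mulVec ((S i).mulVec (w i)) ⬝ᵥ A.mulVec ((S i).mulVec (w i))) *
            (A.mulVec pkm1 ⬝ᵥ A.mulVec pkm1)))⁻¹)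
    ∑ i, prob i * (A.mulVec (xnext i - xstar) ⬝ᵥ A.mulVec (xnext i - xstar)) ≤
      (1 - γk * sigmaMinSq (A * hMpsd.sqrt)) *
        (A.mulVec (xk - xstar) ⬝ᵥ A.mulVec (xk - xstar)) := by
  intro rk w τ pk μ xnext γk
  classical
  set F : ι → ℝ := fun j =>
      (1 - (A.mulVec ((S j).mulVec (w j)) ⬝ᵥ A.mulVec pkm1) ^ 2 /
          ((A.mulVec ((S j).mulVec (w j)) ⬝ᵥ A.mulVec ((S j).mulVec (w j))) *
            (A.mulVec pkm1 ⬝ᵥ A.mulVec pkm1)))⁻¹ with hFdef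
  have hγkdef : γk = sInf (Set.range F) := rfl
  set Ev := A.mulVec (xk - xstar) with hEvdef
  set gv := Aᵀ.mulVec rk with hgvdef
  have hg : gv = -(Aᵀ.mulVec Ev) := by
    rw [hgvdef, hEvdef]
    have h1 : rk = b - A.mulVec xk := rfl
    rw [h1, Matrix.mulVec_sub, Matrix.mulVec_sub, Matrix.mulVec_sub, ← hstar, neg_sub]
  have hww_eq : ∀ i, w i ⬝ᵥ w i = -(Ev ⬝ᵥ A.mulVec ((S i).mulVec (w i))) := by
    intro i
    calc w i ⬝ᵥ w i = (S i)ᵀ.mulVec gv ⬝ᵥ w i := rfl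
      _ = gv ⬝ᵥ (S i).mulVec (w i) := by rw [mulVec_dot, Matrix.transpose_transpose]
      _ = -(Aᵀ.mulVec Ev) ⬝ᵥ (S i).mulVec (w i) := by rw [← hg]
      _ = -(Aᵀ.mulVec Ev ⬝ᵥ (S i).mulVec (w i)) := neg_dotProduct _ _
      _ = -(Ev ⬝ᵥ A.mulVec ((S i).mulVec (w i))) := by
          rw [mulVec_dot, Matrix.transpose_transpose]
  have hwSw : ∀ i, gv ⬝ᵥ (S i).mulVec (w i) = w i ⬝ᵥ w i := by
    intro i
    calc gv ⬝ᵥ (S i).mulVec (w i)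
        = gv ⬝ᵥ (S i)ᵀᵀ.mulVec (w i) := by rw [Matrix.transpose_transpose]
      _ = (S i)ᵀ.mulVec gv ⬝ᵥ w i := (mulVec_dot (S i)ᵀ gv (w i)).symm
      _ = w i ⬝ᵥ w i := rfl
  have helem : ∀ j : ι, 0 ≤ F j := by
    intro j
    rw [hFdef]
    apply inv_nonneg.mpr
    set Ayj := A.mulVec ((S j).mulVec (w j)) with hAyj
    set Apj := A.mulVec pkm1 with hApj
    have hCSj : (Ayj ⬝ᵥ Apj) ^ 2 ≤ (Ayj ⬝ᵥ Ayj) * (Apj ⬝ᵥ Apj) := dotCS _ _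
    by_cases hz : (Ayj ⬝ᵥ Ayj) * (Apj ⬝ᵥ Apj) = 0
    · have h0 : (Ayj ⬝ᵥ Apj) ^ 2 = 0 := le_antisymm (hz ▸ hCSj) (sq_nonneg _)
      rw [h0, zero_div]
      norm_num
    · have hzpos : 0 < (Ayj ⬝ᵥ Ayj) * (Apj ⬝ᵥ Apj) :=
        lt_of_le_of_ne (mul_nonneg (dot_self_nonneg _) (dot_self_nonneg _)) (Ne.symm hz)
      have := (div_le_one hzpos).mpr hCSj
      linarith
  have hbddB : BddBelow (Set.range F) := ⟨0, by rintro t ⟨j, rfl⟩; exact helem j⟩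
  have hγnn : 0 ≤ γk := by
    rw [hγkdef]
    exact le_csInf (Set.range_nonempty _) (by rintro t ⟨j, rfl⟩; exact helem j)
  -- per-sketch key bound
  have key : ∀ i : ι,
      A.mulVec (xnext i - xstar) ⬝ᵥ A.mulVec (xnext i - xstar)
        ≤ Ev ⬝ᵥ Ev - γk * ((w i ⬝ᵥ w i) / opNormSq (A * S i)) := by
    intro i
    set y := (S i).mulVec (w i) with hydef
    set Ay := A.mulVec y with hAydef
    set Ap' := A.mulVec pkm1 with hApdef
    set D := Ap' ⬝ᵥ Ap' with hDdef
    set cc := Ay ⬝ᵥ Ap' with hccdef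
    set Q := Ay ⬝ᵥ Ay with hQdef
    set ww := w i ⬝ᵥ w i with hwwdef
    have hτi : τ i = -cc / D := rfl
    have hApk : A.mulVec (pk i) = Ay + τ i • Ap' := by
      show A.mulVec (y + τ i • pkm1) = _
      rw [Matrix.mulVec_add, Matrix.mulVec_smul, hAydef, hApdef]
    set P := A.mulVec (pk i) ⬝ᵥ A.mulVec (pk i) with hPdef
    have hμi : μ i = ww / P := rfl
    have hwwE : ww = -(Ev ⬝ᵥ Ay) := hww_eq i
    have hEAp' : Ev ⬝ᵥ Ap' = 0 := horth
    have hEApk : Ev ⬝ᵥ A.mulVec (pk i) = -ww := by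
      rw [hApk, dotProduct_add, dotProduct_smul, hEAp', smul_eq_mul,
        mul_zero, add_zero, hwwE, neg_neg]
    have hApkE : A.mulVec (pk i) ⬝ᵥ Ev = -ww := by
      rw [dotProduct_comm]; exact hEApk
    have hval : A.mulVec (xnext i - xstar) ⬝ᵥ A.mulVec (xnext i - xstar)
        = Ev ⬝ᵥ Ev - ww ^ 2 / P := by
      have hx1 : xnext i - xstar = (xk - xstar) + μ i • pk i := by
        show xk + μ i • pk i - xstar = _
        abel
      have hx2 : A.mulVec (xnext i - xstar) = Ev + μ i • A.mulVec (pk i) := by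
        rw [hx1, Matrix.mulVec_add, Matrix.mulVec_smul, hEvdef]
      rw [hx2, dot_expand, hEApk, hApkE, ← hPdef]
      by_cases hP0 : P = 0
      · have hApk0 : A.mulVec (pk i) = 0 :=
          dotProduct_self_eq_zero.mp (by rw [← hPdef]; exact hP0)
        have hww0 : ww = 0 := by
          have h := hEApk
          rw [hApk0, dotProduct_zero] at h
          linarith
        rw [hμi, hww0, hP0]
        simp
      · rw [hμi]
        field_simp
        ring
    have hPQ : P = Q - cc ^ 2 / D := by
      have hexp : P = Q + τ i * cc + (τ i * cc + τ i * τ i * D) := by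
        rw [hPdef, hApk, dot_expand, hccdef, hQdef, hDdef]
        rw [dotProduct_comm Ap' Ay]
        ring
      by_cases hD0 : D = 0
      · have hAp0 : Ap' = 0 := dotProduct_self_eq_zero.mp (by rw [← hDdef]; exact hD0)
        have hcc0 : cc = 0 := by rw [hccdef, hAp0, dotProduct_zero]
        rw [hexp, hτi, hcc0, hD0]
        simp
      · rw [hexp, hτi]
        field_simp
        ring
    rw [hval]
    by_cases hww0 : ww = 0
    · rw [hww0]
      simp
    · have hwwpos : 0 < ww := lt_of_le_of_ne (by rw [hwwdef]; exact dot_self_nonneg _)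
        (Ne.symm hww0)
      have hQnn : 0 ≤ Q := by rw [hQdef]; exact dot_self_nonneg _
      have hQ0 : Q ≠ 0 := by
        intro h
        have hAy0 : Ay = 0 := dotProduct_self_eq_zero.mp (by rw [← hQdef]; exact h)
        apply hww0
        rw [hwwE, hAy0, dotProduct_zero, neg_zero]
      have hQpos : 0 < Q := lt_of_le_of_ne hQnn (Ne.symm hQ0)
      have hCS : cc ^ 2 ≤ Q * D := by
        rw [hccdef, hQdef, hDdef]; exact dotCS Ay Ap'
      have hQop : Q ≤ opNormSq (A * S i) * ww := by
        have h := opNormSq_mulVec_le (A * S i) (w i)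
        rw [← Matrix.mulVec_mulVec] at h
        rw [hQdef, hAydef, hydef, hwwdef]
        exact h
      have hop_pos : 0 < opNormSq (A * S i) := by
        by_contra hcon
        push_neg at hcon
        have : opNormSq (A * S i) * ww ≤ 0 :=
          mul_nonpos_of_nonpos_of_nonneg hcon (le_of_lt hwwpos)
        linarith
      set θ := 1 - cc ^ 2 / (Q * D) with hθdef
      have hθnn : 0 ≤ θ := by
        rw [hθdef]
        by_cases hQD : Q * D = 0
        · have h0 : cc ^ 2 = 0 := le_antisymm (hQD ▸ hCS) (sq_nonneg _)
          rw [h0, zero_div]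
          norm_num
        · have hDnn : 0 ≤ D := by rw [hDdef]; exact dot_self_nonneg _
          have hQDpos : 0 < Q * D := lt_of_le_of_ne (mul_nonneg hQnn hDnn) (Ne.symm hQD)
          have := (div_le_one hQDpos).mpr hCS
          linarith
      have hQθ : P = Q * θ := by
        rw [hPQ, hθdef]
        by_cases hD0 : D = 0
        · have hcc0 : cc = 0 := by
            have hAp0 : Ap' = 0 := dotProduct_self_eq_zero.mp (by rw [← hDdef]; exact hD0)
            rw [hccdef, hAp0, dotProduct_zero]
          rw [hD0, hcc0]
          simp
        · field_simp
      have hθpos : 0 < θ := by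
        refine lt_of_le_of_ne hθnn fun h0 => hww0 ?_
        have hP0 : P = 0 := by rw [hQθ, ← h0, mul_zero]
        have hApk0 : A.mulVec (pk i) = 0 :=
          dotProduct_self_eq_zero.mp (by rw [← hPdef]; exact hP0)
        have h := hEApk
        rw [hApk0, dotProduct_zero] at h
        linarith
      have hFi : F i = θ⁻¹ := by
        rw [hθdef, hccdef, hQdef, hDdef, hAydef, hydef, hApdef]
      have hγle : γk ≤ θ⁻¹ := by
        rw [hγkdef, ← hFi]
        exact csInf_le hbddB ⟨i, rfl⟩
      have e1 : ww / opNormSq (A * S i) ≤ ww ^ 2 / Q := by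
        rw [div_le_div_iff₀ hop_pos hQpos]
        nlinarith [hQop, hwwpos]
      have e2 : γk * (ww / opNormSq (A * S i)) ≤ γk * (ww ^ 2 / Q) :=
        mul_le_mul_of_nonneg_left e1 hγnn
      have e3 : γk * (ww ^ 2 / Q) ≤ θ⁻¹ * (ww ^ 2 / Q) :=
        mul_le_mul_of_nonneg_right hγle (div_nonneg (sq_nonneg ww) (le_of_lt hQpos))
      have e4 : θ⁻¹ * (ww ^ 2 / Q) = ww ^ 2 / P := by
        rw [hQθ, ← div_div, div_eq_inv_mul (ww ^ 2 / Q) θ]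
      linarith [e2, e3, e4.symm.le, e4.le]
  -- summation
  have hsum1 : ∑ i, prob i * (A.mulVec (xnext i - xstar) ⬝ᵥ A.mulVec (xnext i - xstar))
      ≤ ∑ i, prob i * (Ev ⬝ᵥ Ev - γk * ((w i ⬝ᵥ w i) / opNormSq (A * S i))) :=
    Finset.sum_le_sum fun i _ => mul_le_mul_of_nonneg_left (key i) (hprob i)
  have hsum2 : ∑ i, prob i * (Ev ⬝ᵥ Ev - γk * ((w i ⬝ᵥ w i) / opNormSq (A * S i)))
      = Ev ⬝ᵥ Ev - γk * ∑ i, prob i * ((w i ⬝ᵥ w i) / opNormSq (A * S i)) := by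
    simp only [mul_sub]
    rw [Finset.sum_sub_distrib, ← Finset.sum_mul, hsum, one_mul]
    congr 1
    rw [Finset.mul_sum]
    exact Finset.sum_congr rfl fun i _ => by ring
  have hterm2 : ∀ i, gv ⬝ᵥ (S i * (S i)ᵀ).mulVec gv = w i ⬝ᵥ w i := by
    intro i
    rw [← Matrix.mulVec_mulVec]
    exact hwSw i
  have hZdot : ∑ i, prob i * ((w i ⬝ᵥ w i) / opNormSq (A * S i))
      = gv ⬝ᵥ (∑ i, (prob i / opNormSq (A * S i)) • (S i * (S i)ᵀ)).mulVec gv := by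
    rw [dot_sum_eval]
    exact Finset.sum_congr rfl fun i _ => by
      rw [hterm2 i, div_mul_eq_mul_div, mul_div_assoc]
  -- spectral part
  have hHsymm : (hMpsd.sqrt)ᵀ = hMpsd.sqrt := by
    exact psd_sqrt_transpose hMpsd
  have hHH : hMpsd.sqrt * hMpsd.sqrt
      = ∑ i, (prob i / opNormSq (A * S i)) • (S i * (S i)ᵀ) := psd_sqrt_mul_self hMpsd
  set u := A.mulVec (xstar - xk) with hudef
  have huneg : u = -Ev := by
    rw [hudef, hEvdef, show xstar - xk = -(xk - xstar) from (neg_sub _ _).symm,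
      Matrix.mulVec_neg]
  have hATu : Aᵀ.mulVec u = gv := by
    rw [huneg, Matrix.mulVec_neg, ← hg]
  have hBt : (A * hMpsd.sqrt)ᵀ.mulVec u = hMpsd.sqrt.mulVec gv := by
    rw [Matrix.transpose_mul, ← Matrix.mulVec_mulVec, hHsymm, hATu]
  have hBtdot : (A * hMpsd.sqrt)ᵀ.mulVec u ⬝ᵥ (A * hMpsd.sqrt)ᵀ.mulVec u
      = gv ⬝ᵥ (∑ i, (prob i / opNormSq (A * S i)) • (S i * (S i)ᵀ)).mulVec gv := by
    rw [hBt, mulVec_dot, hHsymm, Matrix.mulVec_mulVec, hHH]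
  have hrange : ∃ x0, ((A * hMpsd.sqrt) * (A * hMpsd.sqrt)ᵀ).mulVec x0 = u := by
    apply symm_range
    · rw [Matrix.transpose_mul, Matrix.transpose_transpose]
    · intro yv hyv
      have h1 : (A * hMpsd.sqrt)ᵀ.mulVec yv ⬝ᵥ (A * hMpsd.sqrt)ᵀ.mulVec yv = 0 := by
        rw [mulVec_dot, Matrix.transpose_transpose, Matrix.mulVec_mulVec, hyv,
          dotProduct_zero]
      have h2 : (A * hMpsd.sqrt)ᵀ.mulVec yv = 0 := dotProduct_self_eq_zero.mp h1
      have h3 : hMpsd.sqrt.mulVec (Aᵀ.mulVec yv) = 0 := by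
        rw [Matrix.mulVec_mulVec]
        rw [show hMpsd.sqrt * Aᵀ = (A * hMpsd.sqrt)ᵀ by
          rw [Matrix.transpose_mul, hHsymm]]
        exact h2
      have h4 : (Aᵀ.mulVec yv) ⬝ᵥ
          (∑ i, (prob i / opNormSq (A * S i)) • (S i * (S i)ᵀ)).mulVec (Aᵀ.mulVec yv) = 0 := by
        rw [← hHH, ← Matrix.mulVec_mulVec, h3, Matrix.mulVec_zero, dotProduct_zero]
      have hterm3 : ∀ j, (Aᵀ.mulVec yv) ⬝ᵥ (S j * (S j)ᵀ).mulVec (Aᵀ.mulVec yv)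
          = ((S j)ᵀ.mulVec (Aᵀ.mulVec yv)) ⬝ᵥ ((S j)ᵀ.mulVec (Aᵀ.mulVec yv)) := by
        intro j
        rw [← Matrix.mulVec_mulVec, dotProduct_comm, mulVec_dot]
      have h5 : ∀ j, (prob j / opNormSq (A * S j)) *
          ((Aᵀ.mulVec yv) ⬝ᵥ (S j * (S j)ᵀ).mulVec (Aᵀ.mulVec yv)) = 0 := by
        rw [dot_sum_eval] at h4
        intro j
        refine (Finset.sum_eq_zero_iff_of_nonneg fun j' _ => ?_).mp h4 j (Finset.mem_univ j)
        rw [hterm3 j']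
        exact mul_nonneg (div_nonneg (hprob j') (opNormSq_nonneg _)) (dot_self_nonneg _)
      have h6 : ∀ j, prob j *
          (((S j)ᵀ.mulVec (Aᵀ.mulVec yv)) ⬝ᵥ ((S j)ᵀ.mulVec (Aᵀ.mulVec yv))) = 0 := by
        intro j
        have hj := h5 j
        rw [hterm3 j] at hj
        rcases mul_eq_zero.mp hj with hco | hnorm
        · rcases div_eq_zero_iff.mp hco with hp0 | hop0
          · rw [hp0, zero_mul]
          · have hAS : ∀ v : Fin q → ℝ, (A * S j).mulVec v = 0 := by
              intro v
              have h := opNormSq_mulVec_le (A * S j) v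
              rw [hop0, zero_mul] at h
              exact dotProduct_self_eq_zero.mp (le_antisymm h (dot_self_nonneg _))
            have heq : (S j)ᵀ.mulVec (Aᵀ.mulVec yv) = (A * S j)ᵀ.mulVec yv := by
              rw [Matrix.mulVec_mulVec, Matrix.transpose_mul]
            have hz0 : (S j)ᵀ.mulVec (Aᵀ.mulVec yv) = 0 := by
              rw [heq]
              apply dotProduct_self_eq_zero.mp
              rw [mulVec_dot, Matrix.transpose_transpose, hAS, dotProduct_zero]
            rw [hz0, dotProduct_zero, mul_zero]
        · rw [hnorm, mul_zero]
      have h7 : Aᵀ.mulVec yv = 0 := by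
        by_contra hz
        have hpos := hE.dotProduct_mulVec_pos hz
        have hzero : star (Aᵀ.mulVec yv) ⬝ᵥ
            (∑ i, prob i • (S i * (S i)ᵀ)).mulVec (Aᵀ.mulVec yv) = 0 := by
          rw [show star (Aᵀ.mulVec yv) = Aᵀ.mulVec yv from funext fun l => star_trivial _]
          rw [dot_sum_eval]
          apply Finset.sum_eq_zero
          intro j _
          rw [hterm3 j]
          exact h6 j
        rw [hzero] at hpos
        exact lt_irrefl 0 hpos
      rw [hudef, mulVec_dot, h7, dotProduct_zero]
  obtain ⟨x0, hx0⟩ := hrange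
  have hσ := sigma_key (A * hMpsd.sqrt) u x0 (by rw [Matrix.mulVec_mulVec]; exact hx0)
  rw [hBtdot] at hσ
  have huu : u ⬝ᵥ u = Ev ⬝ᵥ Ev := by
    rw [huneg, neg_dotProduct, dotProduct_neg, neg_neg]
  rw [huu] at hσ
  calc ∑ i, prob i * (A.mulVec (xnext i - xstar) ⬝ᵥ A.mulVec (xnext i - xstar))
      ≤ ∑ i, prob i * (Ev ⬝ᵥ Ev - γk * ((w i ⬝ᵥ w i) / opNormSq (A * S i))) := hsum1
    _ = Ev ⬝ᵥ Ev - γk * ∑ i, prob i * ((w i ⬝ᵥ w i) / opNormSq (A * S i)) := hsum2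
    _ = Ev ⬝ᵥ Ev - γk *
        (gv ⬝ᵥ (∑ i, (prob i / opNormSq (A * S i)) • (S i * (S i)ᵀ)).mulVec gv) := by
        rw [hZdot]
    _ ≤ (1 - γk * sigmaMinSq (A * hMpsd.sqrt)) * (Ev ⬝ᵥ Ev) := by
        nlinarith [mul_le_mul_of_nonneg_left hσ hγnn]
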